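/- Let K be an algebraically closed field and k ≥ 1. Suppose M = (V₁, V₂, α, β, η) and N = (W₁, W₂, γ, δ, θ) are finite-dimensional Γ_con-modules such that the only morphism of representations M → N is zero. Then M or N is filtered by a unique simple module; explicitly, at least one of the following holds: V₁ = 0, or V₂ = 0, or W₁ = 0, or W₂ = 0. -/

import Mathlib

/-- A finite-dimensional module over the contraction algebra `Γ_con` (the path algebra of
the quiver with two vertices, arrows `a : 1 → 2`, `b : 2 → 1` and a loop `y` at vertex `2`,
modulo `y^k = ba`, `ay = 0`, `yb = 0`), given concretely as a representation
`(V₁, V₂, α, β, η)` with `α ∘ β = η^k`, `η ∘ α = 0` and `β ∘ η = 0`. -/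
structure GamRep (K : Type) [Field K] (k : ℕ) : Type 1 where
  V1 : Type
  V2 : Type
  [acg1 : AddCommGroup V1]
  [acg2 : AddCommGroup V2]
  [mod1 : Module K V1]
  [mod2 : Module K V2]
  [fd1 : FiniteDimensional K V1]
  [fd2 : FiniteDimensional K V2]
  α : V1 →ₗ[K] V2
  β : V2 →ₗ[K] V1
  η : V2 →ₗ[K] V2
  rel1 : α ∘ₗ β = η ^ k
  rel2 : η ∘ₗ α = 0
  rel3 : β ∘ₗ η = 0

attribute [instance] GamRep.acg1 GamRep.acg2 GamRep.mod1 GamRep.mod2 GamRep.fd1 GamRep.fd2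

namespace GamRep

variable {K : Type} [Field K] {k : ℕ}

/-- A morphism of `Γ_con`-modules is a pair of linear maps commuting with the three
structure maps. -/
def IsHom (M N : GamRep K k) (φ1 : M.V1 →ₗ[K] N.V1) (φ2 : M.V2 →ₗ[K] N.V2) : Prop :=
  φ2 ∘ₗ M.α = N.α ∘ₗ φ1 ∧ φ1 ∘ₗ M.β = N.β ∘ₗ φ2 ∧ φ2 ∘ₗ M.η = N.η ∘ₗ φ2

/-- An isomorphism of `Γ_con`-modules is a pair of linear isomorphisms commuting with the
structure maps. -/
def Iso (M N : GamRep K k) : Prop :=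
  ∃ (φ1 : M.V1 ≃ₗ[K] N.V1) (φ2 : M.V2 ≃ₗ[K] N.V2),
    M.IsHom N (φ1 : M.V1 →ₗ[K] N.V1) (φ2 : M.V2 →ₗ[K] N.V2)

/-- The zero representation: both underlying vector spaces are trivial. -/
def IsZero (M : GamRep K k) : Prop := Subsingleton M.V1 ∧ Subsingleton M.V2

theorem prodMap_pow {V W : Type} [AddCommGroup V] [Module K V] [AddCommGroup W] [Module K W]
    (f : V →ₗ[K] V) (g : W →ₗ[K] W) (n : ℕ) :
    (f.prodMap g) ^ n = (f ^ n).prodMap (g ^ n) := by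
  induction n with
  | zero => ext <;> simp
  | succ n ih => rw [pow_succ, pow_succ, pow_succ, ih, LinearMap.prodMap_mul]

/-- The direct sum of two representations, taken componentwise. -/
def dsum (M N : GamRep K k) : GamRep K k where
  V1 := M.V1 × N.V1
  V2 := M.V2 × N.V2
  α := M.α.prodMap N.α
  β := M.β.prodMap N.β
  η := M.η.prodMap N.η
  rel1 := by
    rw [show (M.α.prodMap N.α) ∘ₗ (M.β.prodMap N.β) = (M.α ∘ₗ M.β).prodMap (N.α ∘ₗ N.β) from
      LinearMap.prodMap_comp _ _ _ _, M.rel1, N.rel1, prodMap_pow]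
  rel2 := by
    rw [show (M.η.prodMap N.η) ∘ₗ (M.α.prodMap N.α) = (M.η ∘ₗ M.α).prodMap (N.η ∘ₗ N.α) from
      LinearMap.prodMap_comp _ _ _ _, M.rel2, N.rel2, LinearMap.prodMap_zero]
  rel3 := by
    rw [show (M.β.prodMap N.β) ∘ₗ (M.η.prodMap N.η) = (M.β ∘ₗ M.η).prodMap (N.β ∘ₗ N.η) from
      LinearMap.prodMap_comp _ _ _ _, M.rel3, N.rel3, LinearMap.prodMap_zero]

/-- A representation is indecomposable if it is nonzero and not isomorphic to a direct sum
of two nonzero representations. -/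
def Indecomposable (M : GamRep K k) : Prop :=
  ¬ M.IsZero ∧ ∀ N P : GamRep K k, M.Iso (N.dsum P) → N.IsZero ∨ P.IsZero

/-- The endomorphism space of a representation, as a `K`-subspace of the product of the two
spaces of linear endomorphisms. -/
def endSpace (M : GamRep K k) :
    Submodule K ((M.V1 →ₗ[K] M.V1) × (M.V2 →ₗ[K] M.V2)) where
  carrier := {φ | M.IsHom M φ.1 φ.2}
  zero_mem' := by
    refine ⟨?_, ?_, ?_⟩ <;> simp [LinearMap.zero_comp, LinearMap.comp_zero]
  add_mem' := by
    rintro φ ψ ⟨h1, h2, h3⟩ ⟨h4, h5, h6⟩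
    refine ⟨?_, ?_, ?_⟩
    · simp only [Prod.fst_add, Prod.snd_add, LinearMap.add_comp, LinearMap.comp_add, h1, h4]
    · simp only [Prod.fst_add, Prod.snd_add, LinearMap.add_comp, LinearMap.comp_add, h2, h5]
    · simp only [Prod.fst_add, Prod.snd_add, LinearMap.add_comp, LinearMap.comp_add, h3, h6]
  smul_mem' := by
    rintro c φ ⟨h1, h2, h3⟩
    refine ⟨?_, ?_, ?_⟩
    · simp only [Prod.smul_fst, Prod.smul_snd, LinearMap.smul_comp, LinearMap.comp_smul, h1]
    · simp only [Prod.smul_fst, Prod.smul_snd, LinearMap.smul_comp, LinearMap.comp_smul, h2]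
    · simp only [Prod.smul_fst, Prod.smul_snd, LinearMap.smul_comp, LinearMap.comp_smul, h3]

variable (K)

/-- The simple module `S₁ = (K, 0)` with all structure maps zero (a representation whenever
`k ≥ 1`). -/
def S1 (hk : 1 ≤ k) : GamRep K k where
  V1 := K
  V2 := PUnit
  α := 0
  β := 0
  η := 0
  rel1 := by rw [LinearMap.zero_comp, zero_pow (Nat.one_le_iff_ne_zero.mp hk)]
  rel2 := by rw [LinearMap.comp_zero]
  rel3 := by rw [LinearMap.comp_zero]

/-- The simple module `S₂ = (0, K)` with all structure maps zero (a representation whenever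
`k ≥ 1`). -/
def S2 (hk : 1 ≤ k) : GamRep K k where
  V1 := PUnit
  V2 := K
  α := 0
  β := 0
  η := 0
  rel1 := by rw [LinearMap.zero_comp, zero_pow (Nat.one_le_iff_ne_zero.mp hk)]
  rel2 := by rw [LinearMap.comp_zero]
  rel3 := by rw [LinearMap.comp_zero]

/-- The module `M₁ = (K, K, α = id, β = 0, η = 0)` (a representation whenever `k ≥ 1`). -/
def M1 (hk : 1 ≤ k) : GamRep K k where
  V1 := K
  V2 := K
  α := LinearMap.id
  β := 0
  η := 0
  rel1 := by rw [LinearMap.comp_zero, zero_pow (Nat.one_le_iff_ne_zero.mp hk)]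
  rel2 := by rw [LinearMap.zero_comp]
  rel3 := by rw [LinearMap.comp_zero]

/-- The module `M₂ = (K, K, α = 0, β = id, η = 0)` (a representation whenever `k ≥ 1`). -/
def M2 (hk : 1 ≤ k) : GamRep K k where
  V1 := K
  V2 := K
  α := 0
  β := LinearMap.id
  η := 0
  rel1 := by rw [LinearMap.zero_comp, zero_pow (Nat.one_le_iff_ne_zero.mp hk)]
  rel2 := by rw [LinearMap.comp_zero]
  rel3 := by rw [LinearMap.comp_zero]

end GamRep

section Helpers

variable {K V : Type} [Field K] [AddCommGroup V] [Module K V]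

/-- A nonzero functional vanishing on a given proper subspace exists. -/
lemma exists_dual_annihilating (S : Submodule K V) (hS : S ≠ ⊤) :
    ∃ f : V →ₗ[K] K, (∃ v, f v ≠ 0) ∧ ∀ s ∈ S, f s = 0 := by
  have : Nontrivial (V ⧸ S) := Submodule.Quotient.nontrivial_iff.mpr hS
  obtain ⟨q, hq⟩ := exists_ne (0 : V ⧸ S)
  obtain ⟨g, hg⟩ : ∃ g : Module.Dual K (V ⧸ S), g q ≠ 0 := by
    by_contra hcon
    push_neg at hcon
    exact hq ((Module.forall_dual_apply_eq_zero_iff K q).mp hcon)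
  obtain ⟨v, rfl⟩ := S.mkQ_surjective q
  refine ⟨g ∘ₗ S.mkQ, ⟨v, hg⟩, fun s hs => ?_⟩
  simp only [LinearMap.comp_apply, Submodule.mkQ_apply]
  rw [(Submodule.Quotient.mk_eq_zero S).mpr hs, map_zero]

/-- A square-zero endomorphism of a nontrivial space has a nonzero kernel vector. -/
lemma exists_ker_vec_of_sq_zero [Nontrivial V] (T : V →ₗ[K] V) (hT : T ∘ₗ T = 0) :
    ∃ w : V, w ≠ 0 ∧ T w = 0 := by
  by_cases h0 : T = 0
  · obtain ⟨w, hw⟩ := exists_ne (0 : V)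
    exact ⟨w, hw, by rw [h0]; rfl⟩
  · obtain ⟨u, hu⟩ : ∃ u, T u ≠ 0 := by
      by_contra hcon
      push_neg at hcon
      exact h0 (LinearMap.ext fun u => by simp [hcon u])
    exact ⟨T u, hu, by
      have := congrArg (fun (f : V →ₗ[K] V) => f u) hT
      simpa using this⟩

/-- A square-zero endomorphism of a nontrivial space is not surjective. -/
lemma range_ne_top_of_sq_zero [Nontrivial V] (T : V →ₗ[K] V) (hT : T ∘ₗ T = 0) :
    LinearMap.range T ≠ ⊤ := by
  intro htop
  obtain ⟨w, hw⟩ := exists_ne (0 : V)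
  obtain ⟨u, hu⟩ := LinearMap.range_eq_top.mp htop w
  obtain ⟨u', hu'⟩ := LinearMap.range_eq_top.mp htop u
  apply hw
  rw [← hu, ← hu']
  have := congrArg (fun (f : V →ₗ[K] V) => f u') hT
  simpa using this

end Helpers

section GamHelpers

variable {K : Type} [Field K] {k : ℕ}

lemma beta_comp_eta_pow (M : GamRep K k) (hk : 1 ≤ k) : M.β ∘ₗ (M.η ^ k) = 0 := by
  obtain ⟨m, rfl⟩ : ∃ m, k = m + 1 := ⟨k - 1, (Nat.succ_pred_eq_of_pos hk).symm⟩
  rw [pow_succ', Module.End.mul_eq_comp, ← LinearMap.comp_assoc, M.rel3, LinearMap.zero_comp]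

lemma eta_pow_comp_alpha (M : GamRep K k) (hk : 1 ≤ k) : (M.η ^ k) ∘ₗ M.α = 0 := by
  obtain ⟨m, rfl⟩ : ∃ m, k = m + 1 := ⟨k - 1, (Nat.succ_pred_eq_of_pos hk).symm⟩
  rw [pow_succ, Module.End.mul_eq_comp, LinearMap.comp_assoc, M.rel2, LinearMap.comp_zero]

/-- `η` is nilpotent: `η ^ (k+1) = 0`. -/
lemma eta_pow_succ_eq_zero (M : GamRep K k) : M.η ^ (k + 1) = 0 := by
  rw [pow_succ', Module.End.mul_eq_comp, ← M.rel1, ← LinearMap.comp_assoc, M.rel2,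
    LinearMap.zero_comp]

end GamHelpers

/-- If the only morphism between two finite-dimensional `Γ_con`-modules
`M = (V₁, V₂, α, β, η)` and `N = (W₁, W₂, γ, δ, θ)` is zero, then one of the two modules
is filtered by a unique simple module, i.e. at least one of `V₁`, `V₂`, `W₁`, `W₂` is
the zero vector space. -/
theorem orthogonal_gam_modules (K : Type) [Field K] [IsAlgClosed K] (k : ℕ) (hk : 1 ≤ k)
    (M N : GamRep K k)
    (h : ∀ (φ1 : M.V1 →ₗ[K] N.V1) (φ2 : M.V2 →ₗ[K] N.V2),
        M.IsHom N φ1 φ2 → φ1 = 0 ∧ φ2 = 0) :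
    Subsingleton M.V1 ∨ Subsingleton M.V2 ∨ Subsingleton N.V1 ∨ Subsingleton N.V2 := by
  by_contra hcon
  push_neg at hcon
  obtain ⟨hm1, hm2, hn1, hn2⟩ := hcon
  have hδγ : (N.β ∘ₗ N.α) ∘ₗ (N.β ∘ₗ N.α) = 0 := by
    rw [LinearMap.comp_assoc, ← LinearMap.comp_assoc N.α, N.rel1,
      ← LinearMap.comp_assoc, beta_comp_eta_pow N hk, LinearMap.zero_comp]
  have hβα : (M.β ∘ₗ M.α) ∘ₗ (M.β ∘ₗ M.α) = 0 := by
    rw [LinearMap.comp_assoc, ← LinearMap.comp_assoc M.α, M.rel1,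
      ← LinearMap.comp_assoc, beta_comp_eta_pow M hk, LinearMap.zero_comp]
  by_cases hM : LinearMap.range M.α ⊔ LinearMap.range M.η = ⊤
  · -- Case: top₂ M = 0.  Then η = 0 and α is surjective.
    have hmapη : Submodule.map M.η (LinearMap.range M.η) = LinearMap.range M.η := by
      conv_rhs => rw [LinearMap.range_eq_map, ← hM]
      rw [Submodule.map_sup]
      have h1 : Submodule.map M.η (LinearMap.range M.α) = ⊥ := by
        rw [← LinearMap.range_comp, M.rel2, LinearMap.range_zero]
      rw [h1, bot_sup_eq]
    have hmapηn : ∀ n : ℕ,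
        Submodule.map (M.η ^ n) (LinearMap.range M.η) = LinearMap.range M.η := by
      intro n
      induction n with
      | zero => rw [pow_zero]; exact Submodule.map_id _
      | succ n ih =>
        rw [pow_succ', Module.End.mul_eq_comp, Submodule.map_comp, ih, hmapη]
    have hη0 : M.η = 0 := by
      rw [← LinearMap.range_eq_bot]
      have := hmapηn (k + 1)
      rw [eta_pow_succ_eq_zero M, Submodule.map_zero] at this
      exact this.symm
    have hαβ : M.α ∘ₗ M.β = 0 := by
      rw [M.rel1, hη0, zero_pow (Nat.one_le_iff_ne_zero.mp hk)]
    have hαsurj : LinearMap.range M.α = ⊤ := by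
      rw [← hM, hη0, LinearMap.range_zero, sup_bot_eq]
    obtain ⟨w, hw0, hwker⟩ := exists_ker_vec_of_sq_zero (N.β ∘ₗ N.α) hδγ
    obtain ⟨v2, hv2⟩ := exists_ne (0 : M.V2)
    obtain ⟨g, hg⟩ : ∃ g : Module.Dual K M.V2, g v2 ≠ 0 := by
      by_contra hc; push_neg at hc
      exact hv2 ((Module.forall_dual_apply_eq_zero_iff K v2).mp hc)
    set φ2 : M.V2 →ₗ[K] N.V2 := g.smulRight (N.α w) with hφ2
    set φ1 : M.V1 →ₗ[K] N.V1 := (g ∘ₗ M.α).smulRight w with hφ1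
    have hhom : M.IsHom N φ1 φ2 := by
      refine ⟨?_, ?_, ?_⟩
      · ext v
        simp [hφ1, hφ2, LinearMap.smulRight_apply]
      · ext u
        have h1 : M.α (M.β u) = 0 := by
          have := congrArg (fun (f : M.V2 →ₗ[K] M.V2) => f u) hαβ
          simpa using this
        have h2 : N.β (N.α w) = 0 := by simpa using hwker
        simp [hφ1, hφ2, LinearMap.smulRight_apply, h1, h2]
      · ext u
        have h3 : N.η (N.α w) = 0 := by
          have := congrArg (fun (f : N.V1 →ₗ[K] N.V2) => f w) N.rel2
          simpa using this
        simp [hφ1, hφ2, LinearMap.smulRight_apply, hη0, h3]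
    obtain ⟨hz1, _⟩ := h φ1 φ2 hhom
    obtain ⟨v, hv⟩ := LinearMap.range_eq_top.mp hαsurj v2
    have : φ1 v = 0 := by rw [hz1]; rfl
    rw [hφ1] at this
    simp only [LinearMap.smulRight_apply, LinearMap.comp_apply, hv] at this
    exact hw0 ((smul_eq_zero.mp this).resolve_left hg)
  · by_cases hN : LinearMap.ker N.β ⊓ LinearMap.ker N.η = ⊥
    · -- Case: soc₂ N = 0.  Then θ = 0 and δ is injective.
      have step : ∀ i : ℕ, N.η ^ (i + 1 + 1) = 0 → N.η ^ (i + 1) = 0 := by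
        intro i hi
        ext x
        have h1 : N.η ((N.η ^ (i + 1)) x) = 0 := by
          have e : (N.η ^ (i + 1 + 1)) x = N.η ((N.η ^ (i + 1)) x) := by
            rw [pow_succ', Module.End.mul_eq_comp]; rfl
          rw [← e, hi]; rfl
        have h2 : N.β ((N.η ^ (i + 1)) x) = 0 := by
          have e2 : (N.η ^ (i + 1)) x = N.η ((N.η ^ i) x) := by
            rw [pow_succ', Module.End.mul_eq_comp]; rfl
          rw [e2]
          have := congrArg (fun (ff : N.V2 →ₗ[K] N.V1) => ff ((N.η ^ i) x)) N.rel3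
          simpa using this
        have : (N.η ^ (i + 1)) x ∈ LinearMap.ker N.β ⊓ LinearMap.ker N.η :=
          ⟨LinearMap.mem_ker.mpr h2, LinearMap.mem_ker.mpr h1⟩
        rw [hN] at this
        simpa using this
      have hθ0 : N.η = 0 := by
        have key : ∀ i : ℕ, N.η ^ (i + 1) = 0 → N.η = 0 := by
          intro i
          induction i with
          | zero => intro hh; rwa [pow_one] at hh
          | succ n ih => intro hh; exact ih (step n hh)
        exact key (k + 1 - 1) (by
          have := eta_pow_succ_eq_zero N
          simpa using this)
      have hγδ : N.α ∘ₗ N.β = 0 := by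
        rw [N.rel1, hθ0, zero_pow (Nat.one_le_iff_ne_zero.mp hk)]
      have hδinj : LinearMap.ker N.β = ⊥ := by
        rw [← hN, hθ0, LinearMap.ker_zero, inf_top_eq]
      obtain ⟨f, ⟨v, hfv⟩, hfann⟩ :=
        exists_dual_annihilating (LinearMap.range (M.β ∘ₗ M.α))
          (range_ne_top_of_sq_zero (M.β ∘ₗ M.α) hβα)
      obtain ⟨x, hx0⟩ := exists_ne (0 : N.V2)
      set φ2 : M.V2 →ₗ[K] N.V2 := (f ∘ₗ M.β).smulRight x with hφ2
      set φ1 : M.V1 →ₗ[K] N.V1 := f.smulRight (N.β x) with hφ1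
      have hhom : M.IsHom N φ1 φ2 := by
        refine ⟨?_, ?_, ?_⟩
        · ext u
          have h1 : f (M.β (M.α u)) = 0 :=
            hfann _ ⟨u, rfl⟩
          have h2 : N.α (N.β x) = 0 := by
            have := congrArg (fun (ff : N.V2 →ₗ[K] N.V2) => ff x) hγδ
            simpa using this
          simp [hφ1, hφ2, LinearMap.smulRight_apply, h1, h2]
        · ext u
          simp [hφ1, hφ2, LinearMap.smulRight_apply]
        · ext u
          have h3 : M.β (M.η u) = 0 := by
            have := congrArg (fun (ff : M.V2 →ₗ[K] M.V1) => ff u) M.rel3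
            simpa using this
          simp [hφ1, hφ2, LinearMap.smulRight_apply, h3, hθ0]
      obtain ⟨hz1, _⟩ := h φ1 φ2 hhom
      have : φ1 v = 0 := by rw [hz1]; rfl
      rw [hφ1] at this
      simp only [LinearMap.smulRight_apply] at this
      have hδx : N.β x ≠ 0 := fun hh =>
        hx0 (by simpa using (Submodule.eq_bot_iff _).mp hδinj x (LinearMap.mem_ker.mpr hh))
      exact hδx ((smul_eq_zero.mp this).resolve_left hfv)
    · -- Case: top₂ M ≠ 0 and soc₂ N ≠ 0: a morphism factoring through S₂.
      obtain ⟨f, ⟨v, hfv⟩, hfann⟩ :=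
        exists_dual_annihilating (LinearMap.range M.α ⊔ LinearMap.range M.η) hM
      obtain ⟨x, hxmem, hx0⟩ :=
        Submodule.exists_mem_ne_zero_of_ne_bot hN
      have hxβ : N.β x = 0 := (Submodule.mem_inf.mp hxmem).1
      have hxη : N.η x = 0 := (Submodule.mem_inf.mp hxmem).2
      set φ2 : M.V2 →ₗ[K] N.V2 := f.smulRight x with hφ2
      have hhom : M.IsHom N 0 φ2 := by
        refine ⟨?_, ?_, ?_⟩
        · ext u
          have h1 : f (M.α u) = 0 :=
            hfann _ (Submodule.mem_sup_left ⟨u, rfl⟩)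
          simp [hφ2, LinearMap.smulRight_apply, h1]
        · ext u
          simp [hφ2, LinearMap.smulRight_apply, hxβ]
        · ext u
          have h1 : f (M.η u) = 0 :=
            hfann _ (Submodule.mem_sup_right ⟨u, rfl⟩)
          simp [hφ2, LinearMap.smulRight_apply, h1, hxη]
      obtain ⟨_, hz2⟩ := h 0 φ2 hhom
      have : φ2 v = 0 := by rw [hz2]; rfl
      rw [hφ2] at this
      simp only [LinearMap.smulRight_apply] at this
      exact hx0 ((smul_eq_zero.mp this).resolve_left hfv)
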